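/- Let x < y be real numbers, let α₁, α₂, α₃, α₄ satisfy 1 ≥ α₁ > α₂ > α₃ > α₄ ≥ 0, and let a₁, a₂, a₃, a₄ be real numbers with a₁ + a₂ + a₃ + a₄ = 0. If for every continuous convex function f : [x,y] → ℝ and every antiderivative F of f the inequality f((x+y)/2) ≤ (Σ_{i=1}^{4} aᵢF(αᵢx + (1−αᵢ)y))/(y−x) holds, then a₁(α₂−α₁) + (a₁+a₂)(α₃−α₂) + (a₁+a₂+a₃)(α₄−α₃) = 1 and a₁(α₂²−α₁²) + (a₁+a₂)(α₃²−α₂²) + (a₁+a₂+a₃)(α₄²−α₃²) = 1. -/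

import Mathlib

/-- Lemma 3, first part: if the inequality
`f((x+y)/2) ≤ (∑ aᵢ F(αᵢx + (1-αᵢ)y))/(y-x)` holds for every continuous convex `f`
and every antiderivative `F` of `f`, then conditions (M1) and (E1) hold. -/
theorem stmt_7 (x y : ℝ) (hxy : x < y) (α₁ α₂ α₃ α₄ a₁ a₂ a₃ a₄ : ℝ)
    (hα₁ : α₁ ≤ 1) (h12 : α₂ < α₁) (h23 : α₃ < α₂) (h34 : α₄ < α₃) (hα₄ : 0 ≤ α₄)
    (ha : a₁ + a₂ + a₃ + a₄ = 0)
    (H : ∀ f F : ℝ → ℝ, ContinuousOn f (Set.Icc x y) → ConvexOn ℝ (Set.Icc x y) f →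
        (∀ t ∈ Set.Icc x y, HasDerivWithinAt F (f t) (Set.Icc x y) t) →
        f ((x + y) / 2)
          ≤ (a₁ * F (α₁ * x + (1 - α₁) * y) + a₂ * F (α₂ * x + (1 - α₂) * y)
              + a₃ * F (α₃ * x + (1 - α₃) * y) + a₄ * F (α₄ * x + (1 - α₄) * y)) / (y - x)) :
    a₁ * (α₂ - α₁) + (a₁ + a₂) * (α₃ - α₂) + (a₁ + a₂ + a₃) * (α₄ - α₃) = 1 ∧
    a₁ * (α₂ ^ 2 - α₁ ^ 2) + (a₁ + a₂) * (α₃ ^ 2 - α₂ ^ 2)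
      + (a₁ + a₂ + a₃) * (α₄ ^ 2 - α₃ ^ 2) = 1 := by
  have hyx : (0:ℝ) < y - x := by linarith
  have hyx' : y - x ≠ 0 := ne_of_gt hyx
  -- For any affine function f(t) = c*t + d with antiderivative F(t) = c*t^2/2 + d*t,
  -- the hypothesis applied to f and -f gives an equality.
  have key : ∀ c d : ℝ, c * ((x + y) / 2) + d
      = (a₁ * (c * (α₁ * x + (1 - α₁) * y) ^ 2 / 2 + d * (α₁ * x + (1 - α₁) * y))
          + a₂ * (c * (α₂ * x + (1 - α₂) * y) ^ 2 / 2 + d * (α₂ * x + (1 - α₂) * y))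
          + a₃ * (c * (α₃ * x + (1 - α₃) * y) ^ 2 / 2 + d * (α₃ * x + (1 - α₃) * y))
          + a₄ * (c * (α₄ * x + (1 - α₄) * y) ^ 2 / 2 + d * (α₄ * x + (1 - α₄) * y))) / (y - x) := by
    have cont : ∀ c d : ℝ, ContinuousOn (fun t : ℝ => c * t + d) (Set.Icc x y) := by
      intro c d
      exact ((continuous_const.mul continuous_id).add continuous_const).continuousOn
    have conv : ∀ c d : ℝ, ConvexOn ℝ (Set.Icc x y) (fun t : ℝ => c * t + d) := by
      intro c d
      refine ⟨convex_Icc x y, ?_⟩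
      intro p _ q _ u v hu hv huv
      simp only [smul_eq_mul]
      exact le_of_eq (by linear_combination (-d) * huv)
    have der : ∀ c d : ℝ, ∀ t ∈ Set.Icc x y,
        HasDerivWithinAt (fun s : ℝ => c * s ^ 2 / 2 + d * s) (c * t + d) (Set.Icc x y) t := by
      intro c d t _
      have h1 : HasDerivAt (fun s : ℝ => c * s ^ 2 / 2 + d * s) (c * t + d) t := by
        have h2 : HasDerivAt ((fun y : ℝ => c / 2 * y ^ 2) + fun y => d * id y)
            (c / 2 * (((2:ℕ):ℝ) * t ^ (2 - 1)) + d * 1) t := ((hasDerivAt_pow 2 t).const_mul (c / 2)).add ((hasDerivAt_id t).const_mul d)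
        convert h2 using 1
        · funext s; simp only [id, Pi.add_apply]; ring
        · push_cast; ring
      exact h1.hasDerivWithinAt
    intro c d
    have h1 := H (fun t => c * t + d) (fun s => c * s ^ 2 / 2 + d * s)
      (cont c d) (conv c d) (der c d)
    have h2 := H (fun t => (-c) * t + (-d)) (fun s => (-c) * s ^ 2 / 2 + (-d) * s)
      (cont (-c) (-d)) (conv (-c) (-d)) (der (-c) (-d))
    have h3 : ((-c) * ((x + y) / 2) + (-d)) = -(c * ((x + y) / 2) + d) := by ring
    have h4 : (a₁ * ((-c) * (α₁ * x + (1 - α₁) * y) ^ 2 / 2 + (-d) * (α₁ * x + (1 - α₁) * y))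
          + a₂ * ((-c) * (α₂ * x + (1 - α₂) * y) ^ 2 / 2 + (-d) * (α₂ * x + (1 - α₂) * y))
          + a₃ * ((-c) * (α₃ * x + (1 - α₃) * y) ^ 2 / 2 + (-d) * (α₃ * x + (1 - α₃) * y))
          + a₄ * ((-c) * (α₄ * x + (1 - α₄) * y) ^ 2 / 2 + (-d) * (α₄ * x + (1 - α₄) * y))) / (y - x)
        = -((a₁ * (c * (α₁ * x + (1 - α₁) * y) ^ 2 / 2 + d * (α₁ * x + (1 - α₁) * y))
          + a₂ * (c * (α₂ * x + (1 - α₂) * y) ^ 2 / 2 + d * (α₂ * x + (1 - α₂) * y))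
          + a₃ * (c * (α₃ * x + (1 - α₃) * y) ^ 2 / 2 + d * (α₃ * x + (1 - α₃) * y))
          + a₄ * (c * (α₄ * x + (1 - α₄) * y) ^ 2 / 2 + d * (α₄ * x + (1 - α₄) * y))) / (y - x)) := by
      ring
    rw [h3, h4] at h2
    linarith
  -- instantiate with f = 1 and f = t
  have e1 := key 0 1
  have e2 := key 1 0
  rw [eq_div_iff hyx'] at e1 e2
  -- From e1 : Σ aᵢ αᵢ = -1
  have hS1 : a₁ * α₁ + a₂ * α₂ + a₃ * α₃ + a₄ * α₄ = -1 := by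
    have h : (x - y) * (a₁ * α₁ + a₂ * α₂ + a₃ * α₃ + a₄ * α₄ + 1) = 0 := by
      linear_combination -e1 - y * ha
    rcases mul_eq_zero.mp h with h' | h'
    · exact absurd h' (by intro h''; apply hyx'; linarith)
    · linarith
  -- From e2 : Σ aᵢ αᵢ² = -1
  have hS2 : a₁ * α₁ ^ 2 + a₂ * α₂ ^ 2 + a₃ * α₃ ^ 2 + a₄ * α₄ ^ 2 = -1 := by
    have h : (x - y) ^ 2 * (a₁ * α₁ ^ 2 + a₂ * α₂ ^ 2 + a₃ * α₃ ^ 2 + a₄ * α₄ ^ 2 + 1) = 0 := by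
      linear_combination -2 * e2 - 2 * y * (x - y) * hS1 - y ^ 2 * ha
    have h2 : (x - y) ^ 2 ≠ 0 := pow_ne_zero 2 (by intro h''; apply hyx'; linarith)
    rcases mul_eq_zero.mp h with h' | h'
    · exact absurd h' h2
    · linarith
  constructor
  · linear_combination α₄ * ha - hS1
  · linear_combination α₄ ^ 2 * ha - hS2
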